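/- Let E and W be finite-dimensional real normed vector spaces and U ⊆ E open. Let J : U → (E →L[ℝ] E) and K : U → (W →L[ℝ] W) be smooth maps with J(x) ∘ J(x) = -id and K(x) ∘ K(x) = -id for all x ∈ U, and let L : U → (E →L[ℝ] (W →L[ℝ] W)) be smooth with L(x)(J(x)u) = -K(x) ∘ (L(x)(u)) for all x ∈ U, u ∈ E. Define Ĵ : U × W → ((E × W) →L[ℝ] (E × W)) by Ĵ(x,y)(u,v) = (J(x)u, K(x)v + (L(x)(u))(y)). Then Ĵ is an almost complex structure on U × W, and for all u ∈ E and w ∈ W, writing X and Y for the constant vector fields on U × W with values (u,0) and (0,w), the value N_Ĵ(X,Y)(x,y) is independent of y ∈ W and equals (0, (D_{J(x)u}K)(x)(w) - (L(x)(u))(K(x)w) + K(x)((L(x)(u))(w)) - K(x)((D_u K)(x)(w))), where (D_u K)(x) denotes the derivative of x ↦ K(x) at x in direction u. -/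

import Mathlib

/-- The Lie bracket of two vector fields on a normed space. -/
noncomputable def lieB {G : Type*} [NormedAddCommGroup G] [NormedSpace ℝ G]
    (X Y : G → G) : G → G :=
  fun p => fderiv ℝ Y p (X p) - fderiv ℝ X p (Y p)

/-- The Nijenhuis tensor `N_J(X,Y) = [JX,JY] - J[JX,Y] - J[X,JY] - [X,Y]`. -/
noncomputable def nijenhuis {G : Type*} [NormedAddCommGroup G] [NormedSpace ℝ G]
    (J : G → G →L[ℝ] G) (X Y : G → G) : G → G :=
  fun p =>
    lieB (fun q => J q (X q)) (fun q => J q (Y q)) p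
      - J p (lieB (fun q => J q (X q)) Y p)
      - J p (lieB X (fun q => J q (Y q)) p)
      - lieB X Y p

/-- Local coordinate form of a pseudoholomorphic vector bundle structure:
`Ĵ(x,y)(u,v) = (J(x)u, K(x)v + (L(x)(u))(y))`. -/
noncomputable def Jhat {E W : Type*} [NormedAddCommGroup E] [NormedSpace ℝ E]
    [NormedAddCommGroup W] [NormedSpace ℝ W]
    (J : E → E →L[ℝ] E) (K : E → W →L[ℝ] W) (L : E → E →L[ℝ] W →L[ℝ] W) :
    E × W → (E × W) →L[ℝ] (E × W) :=
  fun p =>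
    ((J p.1).comp (ContinuousLinearMap.fst ℝ E W)).prod
      (((K p.1).comp (ContinuousLinearMap.snd ℝ E W)) +
        (((L p.1).flip p.2).comp (ContinuousLinearMap.fst ℝ E W)))

open ContinuousLinearMap

set_option maxHeartbeats 1000000 in
/-- Proposition 3.4 of the paper: `Ĵ` is an almost complex structure on `U × W`,
and pairing a horizontal and a vertical argument of its Nijenhuis tensor gives a
well-defined value independent of the fiber variable `y`, given by the explicit
formula below. -/
theorem nijenhuis_horizontal_vertical_constant_along_fibers
    {E W : Type*} [NormedAddCommGroup E] [NormedSpace ℝ E] [FiniteDimensional ℝ E]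
    [NormedAddCommGroup W] [NormedSpace ℝ W] [FiniteDimensional ℝ W]
    (U : Set E) (hU : IsOpen U)
    (J : E → E →L[ℝ] E) (K : E → W →L[ℝ] W) (L : E → E →L[ℝ] W →L[ℝ] W)
    (hJs : ContDiffOn ℝ (⊤ : ℕ∞) J U)
    (hKs : ContDiffOn ℝ (⊤ : ℕ∞) K U)
    (hLs : ContDiffOn ℝ (⊤ : ℕ∞) L U)
    (hJ2 : ∀ x ∈ U, (J x).comp (J x) = -ContinuousLinearMap.id ℝ E)
    (hK2 : ∀ x ∈ U, (K x).comp (K x) = -ContinuousLinearMap.id ℝ W)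
    (hL : ∀ x ∈ U, ∀ u : E, L x (J x u) = -((K x).comp (L x u))) :
    (ContDiffOn ℝ (⊤ : ℕ∞) (Jhat J K L) (U ×ˢ (Set.univ : Set W)) ∧
      ∀ p ∈ U ×ˢ (Set.univ : Set W),
        (Jhat J K L p).comp (Jhat J K L p) = -ContinuousLinearMap.id ℝ (E × W)) ∧
    ∀ x ∈ U, ∀ y : W, ∀ u : E, ∀ w : W,
      nijenhuis (Jhat J K L) (fun _ => ((u, 0) : E × W)) (fun _ => ((0, w) : E × W)) (x, y)
        = ((0 : E),
            (fderiv ℝ K x (J x u)) w - (L x u) (K x w)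
              + K x ((L x u) w) - K x ((fderiv ℝ K x u) w)) := by
  set s := U ×ˢ (Set.univ : Set W) with hs
  refine ⟨⟨?_, ?_⟩, ?_⟩
  · -- smoothness
    have hmem : ∀ p : E × W, p ∈ s → p.1 ∈ U := fun p hp => hp.1
    have hJ1 : ContDiffOn ℝ (⊤ : ℕ∞) (fun p : E × W => J p.1) s :=
      hJs.comp contDiff_fst.contDiffOn hmem
    have hK1 : ContDiffOn ℝ (⊤ : ℕ∞) (fun p : E × W => K p.1) s :=
      hKs.comp contDiff_fst.contDiffOn hmem
    have hL1 : ContDiffOn ℝ (⊤ : ℕ∞) (fun p : E × W => L p.1) s :=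
      hLs.comp contDiff_fst.contDiffOn hmem
    have hA : ContDiffOn ℝ (⊤ : ℕ∞) (fun p : E × W => (J p.1).comp (fst ℝ E W)) s :=
      hJ1.clm_comp contDiffOn_const
    have hflip : ContDiffOn ℝ (⊤ : ℕ∞) (fun p : E × W => (L p.1).flip) s := by
      exact ContDiff.comp_contDiffOn (g := ⇑(flipₗᵢ ℝ E W W))
        (@LinearIsometryEquiv.contDiff ℝ (E →L[ℝ] W →L[ℝ] W) (W →L[ℝ] E →L[ℝ] W) _ _ _ _ _ _ (flipₗᵢ ℝ E W W)) hL1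
    have hLf : ContDiffOn ℝ (⊤ : ℕ∞) (fun p : E × W => (L p.1).flip p.2) s :=
      hflip.clm_apply contDiff_snd.contDiffOn
    have hB : ContDiffOn ℝ (⊤ : ℕ∞)
        (fun p : E × W => ((K p.1).comp (snd ℝ E W)) + (((L p.1).flip p.2).comp (fst ℝ E W))) s :=
      (hK1.clm_comp contDiffOn_const).add (hLf.clm_comp contDiffOn_const)
    exact (prodₗᵢ (E := E × W) (F := E) (G := W) (𝕜 := ℝ) ℝ).contDiff.comp_contDiffOn (hA.prodMk hB)
  · -- almost complex structure
    rintro ⟨x, y⟩ ⟨hx, -⟩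
    have h1 : ∀ a : E, J x (J x a) = -a := fun a => by
      have := DFunLike.congr_fun (hJ2 x hx) a; simpa using this
    have h2 : ∀ b : W, K x (K x b) = -b := fun b => by
      have := DFunLike.congr_fun (hK2 x hx) b; simpa using this
    have h3 : ∀ a : E, ∀ z : W, L x (J x a) z = -(K x ((L x a) z)) := fun a z => by
      have := DFunLike.congr_fun (hL x hx a) z; simpa using this
    refine ContinuousLinearMap.ext fun v => ?_
    simp [Jhat, Prod.ext_iff, h1, h2, h3, map_add]
  · -- the Nijenhuis computation
    intro x hx y u w
    have hxy : ((x, y) : E × W).1 = x := rfl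
    have hJd : HasFDerivAt J (fderiv ℝ J x) x :=
      (((hJs.differentiableOn (by simp)).differentiableAt (hU.mem_nhds hx))).hasFDerivAt
    have hKd : HasFDerivAt K (fderiv ℝ K x) x :=
      (((hKs.differentiableOn (by simp)).differentiableAt (hU.mem_nhds hx))).hasFDerivAt
    have hLd : HasFDerivAt L (fderiv ℝ L x) x :=
      (((hLs.differentiableOn (by simp)).differentiableAt (hU.mem_nhds hx))).hasFDerivAt
    -- fields
    have hJXeq : (fun q : E × W => Jhat J K L q (u, 0)) = fun q => (J q.1 u, (L q.1 u) q.2) := by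
      funext q; simp [Jhat]
    have hJYeq : (fun q : E × W => Jhat J K L q (0, w)) = fun q => ((0 : E), K q.1 w) := by
      funext q; simp [Jhat]
    -- derivative of q ↦ J q.1 at (x,y)
    have hJ1 : HasFDerivAt (fun q : E × W => J q.1) ((fderiv ℝ J x).comp (fst ℝ E W)) (x, y) :=
      hJd.comp (x, y) (hasFDerivAt_fst)
    have hK1 : HasFDerivAt (fun q : E × W => K q.1) ((fderiv ℝ K x).comp (fst ℝ E W)) (x, y) :=
      hKd.comp (x, y) (hasFDerivAt_fst)
    have hL1 : HasFDerivAt (fun q : E × W => L q.1) ((fderiv ℝ L x).comp (fst ℝ E W)) (x, y) :=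
      by have h := (@HasFDerivAt.comp ℝ _ (E × W) _ _ E _ _ (E →L[ℝ] W →L[ℝ] W) _ _ Prod.fst (fst ℝ E W) (x, y) L (fderiv ℝ L x)) hLd (hasFDerivAt_fst); exact h
    -- JY field derivative
    have hJYd : HasFDerivAt (fun q : E × W => ((0 : E), K q.1 w))
        ((0 : (E × W) →L[ℝ] E).prod
          ((K x).comp 0 + ((fderiv ℝ K x).comp (fst ℝ E W)).flip w)) (x, y) :=
      (hasFDerivAt_const (0 : E) (x, y)).prodMk (hK1.clm_apply (hasFDerivAt_const w (x, y)))
    -- JX field derivative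
    have hJXd : HasFDerivAt (fun q : E × W => (J q.1 u, (L q.1 u) q.2))
        (((J x).comp 0 + ((fderiv ℝ J x).comp (fst ℝ E W)).flip u).prod
          ((L x u).comp (snd ℝ E W) +
            ((L x).comp 0 + ((fderiv ℝ L x).comp (fst ℝ E W)).flip u).flip y)) (x, y) :=
      (hJ1.clm_apply (hasFDerivAt_const u (x, y))).prodMk
        ((hL1.clm_apply (hasFDerivAt_const u (x, y))).clm_apply (hasFDerivAt_snd))
    have hfJY := hJYd.fderiv
    have hfJX := hJXd.fderiv
    have hc1 : fderiv ℝ (fun _ : E × W => ((u, 0) : E × W)) = fun _ => 0 := by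
      funext p; exact fderiv_const_apply _
    have hc2 : fderiv ℝ (fun _ : E × W => ((0, w) : E × W)) = fun _ => 0 := by
      funext p; exact fderiv_const_apply _
    simp only [nijenhuis, lieB, hJXeq, hJYeq, hfJX, hfJY, hc1, hc2]
    simp [Jhat, map_add]
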